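/- Fix a unit quaternion h and define, for x in the unit quaternions S³, the maps α₂(x) = −2 h x j x⁻¹ h⁻¹ and α₃(x) = −2 h x k x⁻¹ h⁻¹. For a quaternion w, let X_w denote the directional (Fréchet) derivative at x in direction w, and write X₁, X₂, X₃ for the derivatives in the directions xi, xj, xk respectively. Then at every x ∈ S³: X₁(α₂) = 2α₃, X₁(α₃) = −2α₂, X₂(α₂) = 0, X₂(α₃) = −α₂×α₃, X₃(α₂) = α₂×α₃, X₃(α₃) = 0, where α₂×α₃(x) = 4 h x i x⁻¹ h⁻¹. -/

import Mathlib

noncomputable section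

open Quaternion

/-- The imaginary quaternion unit `i`. -/
def qi : ℍ[ℝ] := ⟨0, 1, 0, 0⟩

/-- The imaginary quaternion unit `j`. -/
def qj : ℍ[ℝ] := ⟨0, 0, 1, 0⟩

/-- The imaginary quaternion unit `k`. -/
def qk : ℍ[ℝ] := ⟨0, 0, 0, 1⟩

/-- Euclidean inner product on the quaternions: `⟨x,y⟩ = Re (x * star y)`. -/
def ipQ (x y : ℍ[ℝ]) : ℝ := (x * star y).re

/-- Cross product of (imaginary) quaternions: `α × β = ½(αβ − βα)`. -/
def crossQ (a b : ℍ[ℝ]) : ℍ[ℝ] := (1 / 2 : ℝ) • (a * b - b * a)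

lemma key (h q x : ℍ[ℝ]) (hx : x ≠ 0) (q' : ℍ[ℝ]) :
    fderiv ℝ (fun y => -((2:ℝ) • (h * y * q * y⁻¹ * h⁻¹))) x (x * q')
      = -((2:ℝ) • (h * x * (q' * q - q * q') * x⁻¹ * h⁻¹)) := by
  have hxi : x⁻¹ * x = 1 := inv_mul_cancel₀ hx
  set L1 : ℍ[ℝ] →L[ℝ] ℍ[ℝ] := ContinuousLinearMap.mulLeftRight ℝ ℍ[ℝ] h q with hL1
  have h1 : HasFDerivAt (fun y : ℍ[ℝ] => h * y * q) L1 x := by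
    convert L1.hasFDerivAt (x := x) using 1
    ext y <;> simp [hL1]
  have h2 : HasFDerivAt (fun y : ℍ[ℝ] => y⁻¹)
      (-(ContinuousLinearMap.mulLeftRight ℝ ℍ[ℝ] x⁻¹ x⁻¹)) x := hasFDerivAt_inv' hx
  have h3 := ((h1.mul' h2).mul_const' h⁻¹).const_smul (2:ℝ) |>.neg
  rw [(show HasFDerivAt (fun y : ℍ[ℝ] => -((2:ℝ) • (h * y * q * y⁻¹ * h⁻¹))) _ x from h3).fderiv]
  simp only [ContinuousLinearMap.neg_apply, ContinuousLinearMap.smul_apply,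
    ContinuousLinearMap.smulRight_apply, ContinuousLinearMap.add_apply,
    ContinuousLinearMap.coe_smul', Pi.smul_apply, ContinuousLinearMap.mulLeftRight_apply,
    hL1, smul_eq_mul]
  rw [show x⁻¹ * (x * q') * x⁻¹ = q' * x⁻¹ from by rw [← mul_assoc, hxi, one_mul]]
  simp only [MulOpposite.smul_eq_mul_unop, MulOpposite.unop_op]
  congr 1
  congr 1
  noncomm_ring


/-- the directional derivatives of `α₂(x) = −2hxjx⁻¹h⁻¹` and
`α₃(x) = −2hxkx⁻¹h⁻¹` at `x ∈ S³` in the directions `xi, xj, xk` satisfy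
`X₁(α₂) = 2α₃`, `X₁(α₃) = −2α₂`, `X₂(α₂) = 0`, `X₂(α₃) = −α₂×α₃`,
`X₃(α₂) = α₂×α₃`, `X₃(α₃) = 0`, where `α₂×α₃ = 4hxix⁻¹h⁻¹`. -/
theorem stmt15 (h : ℍ[ℝ]) (hh : ‖h‖ = 1)
    (α₂ α₃ : ℍ[ℝ] → ℍ[ℝ])
    (hα₂ : α₂ = fun x => -((2 : ℝ) • (h * x * qj * x⁻¹ * h⁻¹)))
    (hα₃ : α₃ = fun x => -((2 : ℝ) • (h * x * qk * x⁻¹ * h⁻¹)))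
    (x : ℍ[ℝ]) (hx : ‖x‖ = 1) :
    crossQ (α₂ x) (α₃ x) = (4 : ℝ) • (h * x * qi * x⁻¹ * h⁻¹) ∧
    fderiv ℝ α₂ x (x * qi) = (2 : ℝ) • α₃ x ∧
    fderiv ℝ α₃ x (x * qi) = -((2 : ℝ) • α₂ x) ∧
    fderiv ℝ α₂ x (x * qj) = 0 ∧
    fderiv ℝ α₃ x (x * qj) = -(crossQ (α₂ x) (α₃ x)) ∧
    fderiv ℝ α₂ x (x * qk) = crossQ (α₂ x) (α₃ x) ∧
    fderiv ℝ α₃ x (x * qk) = 0 := by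
  have hx0 : x ≠ 0 := by intro h'; rw [h'] at hx; simp at hx
  have hh0 : h ≠ 0 := by intro h'; rw [h'] at hh; simp at hh
  subst hα₂ hα₃
  have hAmul : ∀ a b : ℍ[ℝ],
      (h * x * a * x⁻¹ * h⁻¹) * (h * x * b * x⁻¹ * h⁻¹) = h * x * (a * b) * x⁻¹ * h⁻¹ := by
    intro a b
    simp [mul_assoc, inv_mul_cancel_left₀ hh0, inv_mul_cancel_left₀ hx0]
  have hjk : qj * qk = qi := by ext <;> simp [Quaternion.re_mul, Quaternion.imI_mul, Quaternion.imJ_mul, Quaternion.imK_mul] <;> simp [qi, qj, qk]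
  have hkj : qk * qj = -qi := by ext <;> simp [Quaternion.re_mul, Quaternion.imI_mul, Quaternion.imJ_mul, Quaternion.imK_mul] <;> simp [qi, qj, qk]
  have f1 : qi * qj - qj * qi = (2:ℝ) • qk := by ext <;> simp [Quaternion.re_mul, Quaternion.imI_mul, Quaternion.imJ_mul, Quaternion.imK_mul] <;> simp [qi, qj, qk] <;> norm_num
  have f2 : qi * qk - qk * qi = -((2:ℝ) • qj) := by ext <;> simp [Quaternion.re_mul, Quaternion.imI_mul, Quaternion.imJ_mul, Quaternion.imK_mul] <;> simp [qi, qj, qk] <;> norm_num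
  have f4 : qj * qk - qk * qj = (2:ℝ) • qi := by ext <;> simp [Quaternion.re_mul, Quaternion.imI_mul, Quaternion.imJ_mul, Quaternion.imK_mul] <;> simp [qi, qj, qk] <;> norm_num
  have f5 : qk * qj - qj * qk = -((2:ℝ) • qi) := by ext <;> simp [Quaternion.re_mul, Quaternion.imI_mul, Quaternion.imJ_mul, Quaternion.imK_mul] <;> simp [qi, qj, qk] <;> norm_num
  have hcross : crossQ (-((2:ℝ) • (h * x * qj * x⁻¹ * h⁻¹))) (-((2:ℝ) • (h * x * qk * x⁻¹ * h⁻¹)))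
      = (4 : ℝ) • (h * x * qi * x⁻¹ * h⁻¹) := by
    simp only [crossQ, neg_mul_neg, smul_mul_assoc, mul_smul_comm, smul_smul,
      hAmul, hjk, hkj, mul_neg, neg_mul, smul_neg, sub_neg_eq_add]
    module
  refine ⟨hcross, ?_, ?_, ?_, ?_, ?_, ?_⟩
  · rw [key h qj x hx0 qi, f1]
    simp only [mul_smul_comm, smul_mul_assoc, smul_smul, smul_neg]
  · rw [key h qk x hx0 qi, f2]
    simp only [mul_smul_comm, smul_mul_assoc, smul_smul, smul_neg, mul_neg, neg_mul]
  · rw [key h qj x hx0 qj]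
    simp
  · rw [key h qk x hx0 qj, f4]
    beta_reduce
    rw [hcross]
    simp only [mul_smul_comm, smul_mul_assoc, smul_smul]
    module
  · rw [key h qj x hx0 qk, f5]
    beta_reduce
    rw [hcross]
    simp only [mul_smul_comm, smul_mul_assoc, smul_smul, smul_neg, mul_neg, neg_mul]
    module
  · rw [key h qk x hx0 qk]
    simp
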